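/- Let v ∈ ℝ^n \ {0}, a₀ ∈ ℝ^n, and let (γ_k) be a sequence of strictly positive real numbers with γ_k → ∞; set a_k = a₀ + γ_k v. Then the limit lim_{k→∞} r(−a_k)/γ_k exists and equals sup_{Q ∈ 𝓜} ∫ (v·B) dQ (a finite real number). -/

import Mathlib

open MeasureTheory Filter Topology

/-- For `a_k = a₀ + γ_k v` with `γ_k → ∞`, `γ_k > 0` and `v ≠ 0`,
the limit `lim_k r(−a_k)/γ_k` exists and equals `sup_{Q ∈ 𝓜} ∫ (v·B) dQ`. -/
theorem stmt0
    {Ω : Type*} [MeasurableSpace Ω] (P : Measure Ω) [IsProbabilityMeasure P]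
    {n : ℕ} (B : Fin n → Ω → ℝ)
    (hBmeas : ∀ j, Measurable (B j))
    (C : ℝ) (hBbdd : ∀ j ω, |B j ω| ≤ C)
    (M : Set (Measure Ω)) (hMne : M.Nonempty)
    (hMprob : ∀ Q ∈ M, IsProbabilityMeasure Q)
    (hMac : ∀ Q ∈ M, Q ≪ P)
    (α : Measure Ω → ℝ) (hα : ∀ Q ∈ M, 0 ≤ α Q)
    (r : (Fin n → ℝ) → ℝ)
    (hr : ∀ a : Fin n → ℝ,
      r a = sSup {x | ∃ Q ∈ M, x = ∫ ω, -(∑ j, a j * B j ω) ∂Q - α Q})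
    (v : Fin n → ℝ) (hv : v ≠ 0) (a₀ : Fin n → ℝ)
    (γ : ℕ → ℝ) (hγpos : ∀ k, 0 < γ k) (hγ : Tendsto γ atTop atTop) :
    Tendsto (fun k => r (-(a₀ + γ k • v)) / γ k) atTop
      (𝓝 (sSup {x | ∃ Q ∈ M, x = ∫ ω, (∑ j, v j * B j ω) ∂Q})) := by
  classical
  have hpb : ∀ (a : Fin n → ℝ) (ω : Ω), |∑ j, a j * B j ω| ≤ ∑ j, |a j| * C := by
    intro a ω
    refine (Finset.abs_sum_le_sum_abs _ _).trans (Finset.sum_le_sum fun j _ => ?_)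
    rw [abs_mul]
    exact mul_le_mul_of_nonneg_left (hBbdd j ω) (abs_nonneg _)
  have hint : ∀ (a : Fin n → ℝ) (Q : Measure Ω), IsProbabilityMeasure Q →
      Integrable (fun ω => ∑ j, a j * B j ω) Q := by
    intro a Q hQ
    haveI := hQ
    refine Integrable.mono' (integrable_const (∑ j, |a j| * C))
      ((Finset.measurable_sum Finset.univ fun j _ =>
        (hBmeas j).const_mul (a j)).aestronglyMeasurable)
      (Eventually.of_forall fun ω => ?_)
    simpa [Real.norm_eq_abs] using hpb a ω
  have hib : ∀ (a : Fin n → ℝ) (Q : Measure Ω), IsProbabilityMeasure Q →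
      |∫ ω, ∑ j, a j * B j ω ∂Q| ≤ ∑ j, |a j| * C := by
    intro a Q hQ
    haveI := hQ
    have h := norm_integral_le_of_norm_le_const (μ := Q)
      (f := fun ω => ∑ j, a j * B j ω) (C := ∑ j, |a j| * C)
      (Eventually.of_forall fun ω => by simpa [Real.norm_eq_abs] using hpb a ω)
    simpa [Real.norm_eq_abs] using h
  set K := ∑ j, |a₀ j| * C with hK
  set V := ∑ j, |v j| * C with hV
  set T := {x | ∃ Q ∈ M, x = ∫ ω, (∑ j, v j * B j ω) ∂Q} with hT
  have hTne : T.Nonempty := by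
    obtain ⟨Q, hQ⟩ := hMne
    exact ⟨_, Q, hQ, rfl⟩
  have hTbdd : BddAbove T := by
    refine ⟨V, fun x hx => ?_⟩
    obtain ⟨Q, hQ, rfl⟩ := hx
    exact (le_abs_self _).trans (hib v Q (hMprob Q hQ))
  set S := sSup T with hS
  have hval : ∀ (k : ℕ) (Q : Measure Ω), Q ∈ M →
      (∫ ω, -(∑ j, (-(a₀ + γ k • v)) j * B j ω) ∂Q)
        = (∫ ω, ∑ j, a₀ j * B j ω ∂Q) + γ k * ∫ ω, ∑ j, v j * B j ω ∂Q := by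
    intro k Q hQ
    haveI := hMprob Q hQ
    have h1 : (fun ω => -(∑ j, (-(a₀ + γ k • v)) j * B j ω))
        = fun ω => (∑ j, a₀ j * B j ω) + γ k * ∑ j, v j * B j ω := by
      funext ω
      have hterm : ∀ j : Fin n, (-(a₀ + γ k • v)) j * B j ω
          = -((a₀ j + γ k * v j) * B j ω) := fun j => by
        simp [Pi.neg_apply, Pi.add_apply, Pi.smul_apply, smul_eq_mul]; ring
      rw [Finset.sum_congr rfl fun j _ => hterm j, Finset.sum_neg_distrib, neg_neg,
        Finset.mul_sum, ← Finset.sum_add_distrib]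
      exact Finset.sum_congr rfl fun j _ => by ring
    rw [h1, integral_add (hint a₀ Q ‹_›) ((hint v Q ‹_›).const_mul (γ k))]
    simp only [← smul_eq_mul, integral_smul]
  have hub : ∀ k, r (-(a₀ + γ k • v)) ≤ K + γ k * S := by
    intro k
    rw [hr]
    refine csSup_le ?_ ?_
    · obtain ⟨Q, hQ⟩ := hMne; exact ⟨_, Q, hQ, rfl⟩
    intro x hx
    obtain ⟨Q, hQ, rfl⟩ := hx
    haveI := hMprob Q hQ
    have h1 : ∫ ω, ∑ j, a₀ j * B j ω ∂Q ≤ K := (le_abs_self _).trans (hib a₀ Q ‹_›)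
    have h2 : ∫ ω, ∑ j, v j * B j ω ∂Q ≤ S := le_csSup hTbdd ⟨Q, hQ, rfl⟩
    have h3 := hα Q hQ
    have h4 := mul_le_mul_of_nonneg_left h2 (hγpos k).le
    have h5 := hval k Q hQ
    linarith
  have hlb : ∀ (k : ℕ) (Q : Measure Ω), Q ∈ M →
      (∫ ω, ∑ j, a₀ j * B j ω ∂Q) + γ k * (∫ ω, ∑ j, v j * B j ω ∂Q) - α Q
        ≤ r (-(a₀ + γ k • v)) := by
    intro k Q hQ
    rw [hr]
    have hbdd : BddAbove {x | ∃ Q ∈ M,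
        x = ∫ ω, -(∑ j, (-(a₀ + γ k • v)) j * B j ω) ∂Q - α Q} := by
      refine ⟨K + γ k * V, fun x hx => ?_⟩
      obtain ⟨Q', hQ', rfl⟩ := hx
      haveI := hMprob Q' hQ'
      have h1 : ∫ ω, ∑ j, a₀ j * B j ω ∂Q' ≤ K := (le_abs_self _).trans (hib a₀ Q' ‹_›)
      have h2 : ∫ ω, ∑ j, v j * B j ω ∂Q' ≤ V := (le_abs_self _).trans (hib v Q' ‹_›)
      have h3 := hα Q' hQ'
      have h4 := mul_le_mul_of_nonneg_left h2 (hγpos k).le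
      have h5 := hval k Q' hQ'
      linarith
    have hmem : (∫ ω, -(∑ j, (-(a₀ + γ k • v)) j * B j ω) ∂Q) - α Q ∈
        {x | ∃ Q ∈ M, x = ∫ ω, -(∑ j, (-(a₀ + γ k • v)) j * B j ω) ∂Q - α Q} :=
      ⟨Q, hQ, rfl⟩
    have h6 := le_csSup hbdd hmem
    have h5 := hval k Q hQ
    linarith
  rw [Metric.tendsto_atTop]
  intro ε hε
  obtain ⟨x, hxT, hx⟩ := exists_lt_of_lt_csSup hTne (show S - ε / 2 < S by linarith)
  obtain ⟨Q, hQ, rfl⟩ := hxT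
  set c := |K| + α Q + 1 with hc
  have hαQ := hα Q hQ
  have hc0 : 0 < c := by have := abs_nonneg K; simp only [hc]; linarith
  obtain ⟨N, hN⟩ := eventually_atTop.mp (hγ.eventually_ge_atTop (2 * c / ε))
  refine ⟨N, fun k hk => ?_⟩
  have hγk := hγpos k
  have hγne := ne_of_gt hγk
  have hγge : 2 * c / ε ≤ γ k := hN k hk
  have hcγ : c / γ k ≤ ε / 2 := by
    rw [div_le_iff₀ hγk]
    rw [div_le_iff₀ hε] at hγge
    nlinarith
  haveI := hMprob Q hQ
  have hIa := abs_le.mp (hib a₀ Q ‹_›)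
  -- upper bound on f k - S
  have hup : r (-(a₀ + γ k • v)) / γ k - S ≤ c / γ k := by
    have h1 : r (-(a₀ + γ k • v)) / γ k ≤ (K + γ k * S) / γ k := by
      gcongr
      exact hub k
    rw [add_div, mul_div_cancel_left₀ _ hγne] at h1
    have h2 : K / γ k ≤ c / γ k := by
      gcongr
      have := le_abs_self K
      simp only [hc]; linarith
    linarith
  -- lower bound
  have hlow : S - ε / 2 - c / γ k < r (-(a₀ + γ k • v)) / γ k := by
    have h1 := hlb k Q hQ
    have h2 : γ k * (S - ε / 2) < γ k * ∫ ω, ∑ j, v j * B j ω ∂Q :=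
      mul_lt_mul_of_pos_left hx hγk
    have h3 : γ k * (S - ε / 2) - c < r (-(a₀ + γ k • v)) := by
      have hK' : -|K| ≤ ∫ ω, ∑ j, a₀ j * B j ω ∂Q := by
        have h := hIa.1
        rw [← hK] at h
        linarith [le_abs_self K]
      simp only [hc] at *
      linarith
    have h4 : (γ k * (S - ε / 2) - c) / γ k < r (-(a₀ + γ k • v)) / γ k := by
      gcongr
    rw [sub_div, mul_div_cancel_left₀ _ hγne] at h4
    linarith
  rw [Real.dist_eq, abs_lt]
  constructor <;> linarith
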